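/- Let a, b > 0, γ = b/a, μ ∈ ℝ, and ξ_r, η_r ∈ {−1, 1}. In dimensionless coordinates (ξ, η), define ψ_r = (1+ξ_r ξ)(1+η_r η)/4, f_r = −(ξ_r η_r/8)·((μ/γ)ξ² + γη² − μ/γ − γ), and g_r = −(ξ_r η_r/8)·((1/γ)ξ² + μγη² − 1/γ − μγ), and consider the incompatible-element displacement contribution of node r with nodal values (v^x, v^y): u_x = ψ_r v^x + f_r v^y, u_y = g_r v^x + ψ_r v^y, where the physical coordinates are x = x_c + (a/2)ξ, y = y_c + (b/2)η. Then the strain vector (∂u_x/∂x, ∂u_y/∂y, ∂u_y/∂x + ∂u_x/∂y) equals β_r^{inc}(ξ,η)·(v^x, v^y)ᵀ with β_r^{inc}(ξ,η) = (1/2)·[[ξ_r(1+η_r η)/a, −μ ξ_r η_r ξ/b], [−μ ξ_r η_r η/a, η_r(1+ξ_r ξ)/b], [η_r/b, ξ_r/a]]; in particular the shear-strain row is constant in (ξ, η): ∂g_r/∂x + ∂ψ_r/∂y = η_r/(2b) and ∂ψ_r/∂x + ∂f_r/∂y = ξ_r/(2a). -/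

import Mathlib

open Matrix

/-- Bilinear shape function of node r in dimensionless coordinates. -/
noncomputable def psiB (ξr ηr ξ η : ℝ) : ℝ :=
  (1 + ξr * ξ) * (1 + ηr * η) / 4

/-- Incompatible quadratic correction mode `f_r`. -/
noncomputable def fInc (γ μ ξr ηr ξ η : ℝ) : ℝ :=
  -(ξr * ηr / 8) * ((μ / γ) * ξ ^ 2 + γ * η ^ 2 - μ / γ - γ)

/-- Incompatible quadratic correction mode `g_r`. -/
noncomputable def gInc (γ μ ξr ηr ξ η : ℝ) : ℝ :=
  -(ξr * ηr / 8) * ((1 / γ) * ξ ^ 2 + μ * γ * η ^ 2 - 1 / γ - μ * γ)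

/-- Strain–displacement matrix of the incompatible bilinear rectangular element. -/
noncomputable def betaInc (a b μ ξr ηr ξ η : ℝ) : Matrix (Fin 3) (Fin 2) ℝ :=
  (1 / 2 : ℝ) • !![ξr * (1 + ηr * η) / a, -(μ * ξr * ηr * ξ) / b;
                   -(μ * ξr * ηr * η) / a, ηr * (1 + ξr * ξ) / b;
                   ηr / b, ξr / a]

lemma quadDeriv (A B C c d x : ℝ) :
    HasDerivAt (fun t : ℝ => A + B * (2 * (t - c) / d) + C * (2 * (t - c) / d) ^ 2)
      ((B + 2 * C * (2 * (x - c) / d)) * (2 / d)) x := by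
  have h1 : HasDerivAt (fun t : ℝ => 2 * (t - c) / d) (2 / d) x := by
    simpa using (((hasDerivAt_id x).sub_const c).const_mul 2).div_const d
  have h2 : HasDerivAt (fun t : ℝ => A + B * (2 * (t - c) / d) + C * (2 * (t - c) / d) ^ 2) _ x :=
    ((h1.const_mul B).const_add A).add ((h1.pow 2).const_mul C)
  convert h2 using 1
  norm_num
  ring

theorem incompatible_element_strain_displacement
    (a b xc yc γ μ ξr ηr vx vy : ℝ)
    (ha : 0 < a) (hb : 0 < b) (hγ : γ = b / a)
    (hξr : ξr = -1 ∨ ξr = 1) (hηr : ηr = -1 ∨ ηr = 1)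
    (Ux Uy : ℝ → ℝ → ℝ)
    (hUx : Ux = fun x y =>
      psiB ξr ηr (2 * (x - xc) / a) (2 * (y - yc) / b) * vx +
        fInc γ μ ξr ηr (2 * (x - xc) / a) (2 * (y - yc) / b) * vy)
    (hUy : Uy = fun x y =>
      gInc γ μ ξr ηr (2 * (x - xc) / a) (2 * (y - yc) / b) * vx +
        psiB ξr ηr (2 * (x - xc) / a) (2 * (y - yc) / b) * vy) :
    ∀ x y : ℝ,
      (![deriv (fun x' => Ux x' y) x,
         deriv (fun y' => Uy x y') y,
         deriv (fun x' => Uy x' y) x + deriv (fun y' => Ux x y') y] =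
        (betaInc a b μ ξr ηr (2 * (x - xc) / a) (2 * (y - yc) / b)).mulVec
          ![vx, vy]) ∧
      deriv (fun x' => gInc γ μ ξr ηr (2 * (x' - xc) / a) (2 * (y - yc) / b)) x +
          deriv (fun y' => psiB ξr ηr (2 * (x - xc) / a) (2 * (y' - yc) / b)) y =
        ηr / (2 * b) ∧
      deriv (fun x' => psiB ξr ηr (2 * (x' - xc) / a) (2 * (y - yc) / b)) x +
          deriv (fun y' => fInc γ μ ξr ηr (2 * (x - xc) / a) (2 * (y' - yc) / b)) y =
        ξr / (2 * a) := by
  subst hUx hUy hγ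
  intro x y
  beta_reduce
  have hane : a ≠ 0 := ha.ne'
  have hbne : b ≠ 0 := hb.ne'
  set γ : ℝ := b / a with hγ
  have hγne : γ ≠ 0 := div_ne_zero hbne hane
  set ξ : ℝ := 2 * (x - xc) / a with hξdef
  set η : ℝ := 2 * (y - yc) / b with hηdef
  -- derivatives in x
  have hψx : HasDerivAt (fun x' => psiB ξr ηr (2 * (x' - xc) / a) η)
      (ξr * (1 + ηr * η) / (2 * a)) x := by
    have h := quadDeriv ((1 + ηr * η) / 4) (ξr * (1 + ηr * η) / 4) 0 xc a x
    have he : (fun x' : ℝ => psiB ξr ηr (2 * (x' - xc) / a) η)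
        = fun t => (1 + ηr * η) / 4 + (ξr * (1 + ηr * η) / 4) * (2 * (t - xc) / a)
            + 0 * (2 * (t - xc) / a) ^ 2 := by
      funext t; simp only [psiB]; ring
    rw [he]
    convert h using 1
    field_simp; ring
  have hfx : HasDerivAt (fun x' => fInc γ μ ξr ηr (2 * (x' - xc) / a) η)
      (-(μ * ξr * ηr * ξ) / (2 * b)) x := by
    have h := quadDeriv (-(ξr * ηr / 8) * (γ * η ^ 2 - μ / γ - γ)) 0
        (-(ξr * ηr / 8) * (μ / γ)) xc a x
    have he : (fun x' : ℝ => fInc γ μ ξr ηr (2 * (x' - xc) / a) η)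
        = fun t => -(ξr * ηr / 8) * (γ * η ^ 2 - μ / γ - γ) + 0 * (2 * (t - xc) / a)
            + (-(ξr * ηr / 8) * (μ / γ)) * (2 * (t - xc) / a) ^ 2 := by
      funext t; simp only [fInc]; ring
    rw [he]
    convert h using 1
    rw [hξdef, hγ]
    field_simp; ring
  have hgx : HasDerivAt (fun x' => gInc γ μ ξr ηr (2 * (x' - xc) / a) η)
      (-(ξr * ηr * ξ) / (2 * b)) x := by
    have h := quadDeriv (-(ξr * ηr / 8) * (μ * γ * η ^ 2 - 1 / γ - μ * γ)) 0
        (-(ξr * ηr / 8) * (1 / γ)) xc a x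
    have he : (fun x' : ℝ => gInc γ μ ξr ηr (2 * (x' - xc) / a) η)
        = fun t => -(ξr * ηr / 8) * (μ * γ * η ^ 2 - 1 / γ - μ * γ) + 0 * (2 * (t - xc) / a)
            + (-(ξr * ηr / 8) * (1 / γ)) * (2 * (t - xc) / a) ^ 2 := by
      funext t; simp only [gInc]; ring
    rw [he]
    convert h using 1
    rw [hξdef, hγ]
    field_simp; ring
  -- derivatives in y
  have hψy : HasDerivAt (fun y' => psiB ξr ηr ξ (2 * (y' - yc) / b))
      (ηr * (1 + ξr * ξ) / (2 * b)) y := by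
    have h := quadDeriv ((1 + ξr * ξ) / 4) (ηr * (1 + ξr * ξ) / 4) 0 yc b y
    have he : (fun y' : ℝ => psiB ξr ηr ξ (2 * (y' - yc) / b))
        = fun t => (1 + ξr * ξ) / 4 + (ηr * (1 + ξr * ξ) / 4) * (2 * (t - yc) / b)
            + 0 * (2 * (t - yc) / b) ^ 2 := by
      funext t; simp only [psiB]; ring
    rw [he]
    convert h using 1
    field_simp; ring
  have hfy : HasDerivAt (fun y' => fInc γ μ ξr ηr ξ (2 * (y' - yc) / b))
      (-(ξr * ηr * η) / (2 * a)) y := by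
    have h := quadDeriv (-(ξr * ηr / 8) * ((μ / γ) * ξ ^ 2 - μ / γ - γ)) 0
        (-(ξr * ηr / 8) * γ) yc b y
    have he : (fun y' : ℝ => fInc γ μ ξr ηr ξ (2 * (y' - yc) / b))
        = fun t => -(ξr * ηr / 8) * ((μ / γ) * ξ ^ 2 - μ / γ - γ) + 0 * (2 * (t - yc) / b)
            + (-(ξr * ηr / 8) * γ) * (2 * (t - yc) / b) ^ 2 := by
      funext t; simp only [fInc]; ring
    rw [he]
    convert h using 1
    rw [hηdef, hγ]
    field_simp; ring
  have hgy : HasDerivAt (fun y' => gInc γ μ ξr ηr ξ (2 * (y' - yc) / b))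
      (-(μ * ξr * ηr * η) / (2 * a)) y := by
    have h := quadDeriv (-(ξr * ηr / 8) * ((1 / γ) * ξ ^ 2 - 1 / γ - μ * γ)) 0
        (-(ξr * ηr / 8) * (μ * γ)) yc b y
    have he : (fun y' : ℝ => gInc γ μ ξr ηr ξ (2 * (y' - yc) / b))
        = fun t => -(ξr * ηr / 8) * ((1 / γ) * ξ ^ 2 - 1 / γ - μ * γ) + 0 * (2 * (t - yc) / b)
            + (-(ξr * ηr / 8) * (μ * γ)) * (2 * (t - yc) / b) ^ 2 := by
      funext t; simp only [gInc]; ring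
    rw [he]
    convert h using 1
    rw [hηdef, hγ]
    field_simp; ring
  have D1 := ((hψx.mul_const vx).add (hfx.mul_const vy)).deriv
  have D2 := ((hgy.mul_const vx).add (hψy.mul_const vy)).deriv
  have D3 := ((hgx.mul_const vx).add (hψx.mul_const vy)).deriv
  have D4 := ((hψy.mul_const vx).add (hfy.mul_const vy)).deriv
  simp only [Pi.add_def] at D1 D2 D3 D4
  refine ⟨?_, ?_, ?_⟩
  · funext i
    fin_cases i <;>
      simp only [Matrix.cons_val_zero, Matrix.cons_val_one, Matrix.head_cons, D1, D2, D3, D4,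
        betaInc, Matrix.smul_apply, Matrix.mulVec, dotProduct, Fin.sum_univ_two,
        Matrix.cons_val', Matrix.empty_val', Matrix.cons_val_fin_one, Matrix.head_fin_const,
        Matrix.cons_val_two, Matrix.tail_cons, smul_eq_mul, Matrix.of_apply, Fin.zero_eta, Fin.mk_one, Fin.reduceFinMk] <;>
      field_simp <;> ring
  · rw [hgx.deriv, hψy.deriv]
    field_simp; ring
  · rw [hψx.deriv, hfy.deriv]
    field_simp; ring
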